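/- Let d ≥ 1, u ≥ 0 and n ≥ u + d. Let T be a family of subsets of P = {1,…,n} with the following property: for every two repositories on P with K = ∅, C = ∅, at most u unknown dependencies (|U| ≤ u) and at most d defective packages each, if every query in T receives identical feedback under both repositories then the two repositories have the same set of defective packages. Then T is an (n, d−1, u+1)-cover-free family. -/

import Mathlib

/-- A software repository on package set `Fin n`: known dependencies `K`,
unknown dependencies `U`, conflicts `C` (unordered pairs of distinct packages),
and broken packages `B`. -/
structure Repo (n : ℕ) where
  K : Finset (Fin n × Fin n)
  U : Finset (Fin n × Fin n)
  C : Finset (Sym2 (Fin n))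
  B : Finset (Fin n)
  hC : ∀ s ∈ C, ¬ s.IsDiag

/-- An installation `I` is successful if it avoids broken packages, is closed
under all (known and unknown) dependencies, and contains no conflicting pair. -/
def Successful {n : ℕ} (R : Repo n) (I : Finset (Fin n)) : Prop :=
  Disjoint I R.B ∧
  (∀ e ∈ R.K ∪ R.U, e.1 ∈ I → e.2 ∈ I) ∧
  (∀ s ∈ R.C, ¬ ∀ x ∈ s, x ∈ I)

/-- A package is defective if no successful installation contains it. -/
def Defective {n : ℕ} (R : Repo n) (p : Fin n) : Prop :=
  ∀ I : Finset (Fin n), Successful R I → p ∉ I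

/-- The set of defective packages. -/
def DefSet {n : ℕ} (R : Repo n) : Set (Fin n) := {p | Defective R p}

/-- Two packages weakly conflict if no successful installation contains both. -/
def WeakConflict {n : ℕ} (R : Repo n) (p q : Fin n) : Prop :=
  ∀ I : Finset (Fin n), Successful R I → ¬ (p ∈ I ∧ q ∈ I)

/-- `p` weakly depends on `q` if every successful installation containing `p`
also contains `q`. -/
def WeakDep {n : ℕ} (R : Repo n) (p q : Fin n) : Prop :=
  ∀ I : Finset (Fin n), Successful R I → p ∈ I → q ∈ I

/-- The weakly-conflicting pairs of non-defective packages (each unordered pair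
counted once via `<`). -/
def WeakConflictPairs {n : ℕ} (R : Repo n) : Set (Fin n × Fin n) :=
  {pq | pq.1 < pq.2 ∧ ¬ Defective R pq.1 ∧ ¬ Defective R pq.2 ∧
    WeakConflict R pq.1 pq.2}

/-- `(n,a,b)`-cover-free family. -/
def IsCFF (n a b : ℕ) (T : Finset (Finset (Fin n))) : Prop :=
  ∀ S₁ S₂ : Finset (Fin n), Disjoint S₁ S₂ → S₁.card = a → S₂.card = b →
    ∃ v ∈ T, Disjoint v S₁ ∧ S₂ ⊆ v

/-- The `(≤a, ≤b)`-covering property. -/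
def CoveringLE (n a b : ℕ) (F : Finset (Finset (Fin n))) : Prop :=
  ∀ S₁ S₂ : Finset (Fin n), Disjoint S₁ S₂ → S₁.card ≤ a →
    1 ≤ S₂.card → S₂.card ≤ b → ∃ v ∈ F, Disjoint v S₁ ∧ S₂ ⊆ v

/-- The digraph of known dependencies is acyclic. -/
def Acyclic {n : ℕ} (K : Finset (Fin n × Fin n)) : Prop :=
  ∀ p : Fin n, ¬ Relation.TransGen (fun x y => (x, y) ∈ K) p p

open Classical in
/-- The `K`-closure of `v`: everything reachable from `v` along `K`-edges. -/
noncomputable def kclosure {n : ℕ} (K : Finset (Fin n × Fin n))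
    (v : Finset (Fin n)) : Finset (Fin n) :=
  Finset.univ.filter
    (fun p => ∃ q ∈ v, Relation.ReflTransGen (fun x y => (x, y) ∈ K) q p)

/-- `Sset R T p`: the queries of `T` that are successful installations
containing `p`. -/
def Sset {n : ℕ} (R : Repo n) (T : Finset (Finset (Fin n))) (p : Fin n) :
    Set (Finset (Fin n)) :=
  {t | t ∈ T ∧ Successful R t ∧ p ∈ t}


/-- Any non-adaptive query family solving Maximal Sub-repository with at most
`u` unknown dependencies and at most `d` defects is an
`(n, d-1, u+1)`-cover-free family. -/
theorem maximal_subrepo_CFF_lower_bound (n u d : ℕ) (hd : 1 ≤ d)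
    (hn : u + d ≤ n) (T : Finset (Finset (Fin n)))
    (hT : ∀ R₁ R₂ : Repo n,
      R₁.K = ∅ → R₂.K = ∅ → R₁.C = ∅ → R₂.C = ∅ →
      R₁.U.card ≤ u → R₂.U.card ≤ u →
      (DefSet R₁).ncard ≤ d → (DefSet R₂).ncard ≤ d →
      (∀ t ∈ T, Successful R₁ t ↔ Successful R₂ t) →
      DefSet R₁ = DefSet R₂) :
    IsCFF n (d - 1) (u + 1) T := by
  intro S₁ S₂ hdisj h1 h2
  by_contra hcon
  push_neg at hcon
  have hS₂ : S₂.Nonempty := Finset.card_pos.mp (by omega)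
  obtain ⟨p, hp⟩ := hS₂
  have hpS₁ : p ∉ S₁ := fun h => Finset.disjoint_left.mp hdisj h hp
  let R₁ : Repo n := ⟨∅, ∅, ∅, insert p S₁, by simp⟩
  let R₂ : Repo n := ⟨∅, (S₂.erase p).image (fun q => (p, q)), ∅, S₁, by simp⟩
  have hsucc1 : ∀ I, Successful R₁ I ↔ Disjoint I S₁ ∧ p ∉ I := by
    intro I
    constructor
    · rintro ⟨hd', -, -⟩
      rw [show R₁.B = insert p S₁ from rfl, Finset.disjoint_insert_right] at hd'
      exact ⟨hd'.2, hd'.1⟩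
    · rintro ⟨hd', hpI⟩
      refine ⟨?_, by simp [R₁], by simp [R₁]⟩
      rw [show R₁.B = insert p S₁ from rfl, Finset.disjoint_insert_right]
      exact ⟨hpI, hd'⟩
  have hsucc2 : ∀ I, Successful R₂ I ↔
      Disjoint I S₁ ∧ (p ∈ I → ∀ q ∈ S₂.erase p, q ∈ I) := by
    intro I
    constructor
    · rintro ⟨hd', hdep, -⟩
      refine ⟨hd', fun hpI q hq => ?_⟩
      have : (p, q) ∈ R₂.K ∪ R₂.U := by
        simp only [show R₂.K = ∅ from rfl, Finset.empty_union]
        exact Finset.mem_image.mpr ⟨q, hq, rfl⟩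
      exact hdep _ this hpI
    · rintro ⟨hd', hclose⟩
      refine ⟨hd', ?_, by simp [R₂]⟩
      intro e he h1e
      simp only [show R₂.K = ∅ from rfl, show R₂.U = (S₂.erase p).image (fun q => (p, q)) from rfl, Finset.empty_union, Finset.mem_image] at he
      obtain ⟨q, hq, rfl⟩ := he
      exact hclose h1e q hq
  have hdef1 : DefSet R₁ = ↑(insert p S₁) := by
    ext q
    simp only [DefSet, Set.mem_setOf_eq, Defective, Finset.coe_insert, Set.mem_insert_iff,
      Finset.mem_coe]
    constructor
    · intro h
      by_contra hq
      push_neg at hq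
      exact h {q} ((hsucc1 {q}).mpr ⟨by simp [hq.2], by simp [Ne.symm hq.1]⟩) (by simp)
    · intro hq I hI hqI
      rcases (hsucc1 I).mp hI with ⟨hIS, hpI⟩
      rcases hq with rfl | hq
      · exact hpI hqI
      · exact Finset.disjoint_left.mp hIS hqI hq
  have hdef2 : DefSet R₂ = ↑S₁ := by
    ext q
    simp only [DefSet, Set.mem_setOf_eq, Defective, Finset.mem_coe]
    constructor
    · intro h
      by_contra hq
      by_cases hqp : q = p
      · subst hqp
        refine h S₂ ((hsucc2 S₂).mpr ⟨hdisj.symm, fun _ r hr => Finset.mem_of_mem_erase hr⟩) hp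
      · exact h {q} ((hsucc2 {q}).mpr ⟨by simp [hq], fun hpI => absurd (Finset.mem_singleton.mp hpI) (Ne.symm hqp)⟩) (by simp)
    · intro hq I hI hqI
      exact Finset.disjoint_left.mp ((hsucc2 I).mp hI).1 hqI hq
  have hUcard : R₂.U.card ≤ u := by
    calc R₂.U.card ≤ (S₂.erase p).card := Finset.card_image_le
      _ = u := by rw [Finset.card_erase_of_mem hp, h2]; omega
  have hfeed : ∀ t ∈ T, Successful R₁ t ↔ Successful R₂ t := by
    intro t ht
    rw [hsucc1, hsucc2]
    constructor
    · rintro ⟨hd', hpt⟩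
      exact ⟨hd', fun hpI => absurd hpI hpt⟩
    · rintro ⟨hd', hclose⟩
      refine ⟨hd', fun hpt => hcon t ht hd' fun q hq => ?_⟩
      by_cases hqp : q = p
      · subst hqp; exact hpt
      · exact hclose hpt q (Finset.mem_erase.mpr ⟨hqp, hq⟩)
  have key := hT R₁ R₂ rfl rfl rfl rfl (by simp [R₁]) hUcard
    (by rw [hdef1, Set.ncard_coe_finset, Finset.card_insert_of_notMem hpS₁, h1]; omega)
    (by rw [hdef2, Set.ncard_coe_finset, h1]; omega)
    hfeed
  rw [hdef1, hdef2] at key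
  have : p ∈ (↑S₁ : Set (Fin n)) := key ▸ (by simp : p ∈ (↑(insert p S₁) : Set (Fin n)))
  exact hpS₁ this
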